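/- arXiv:2403.07723 — 4 statements merged into one kernel-verified Lean document; each statement's English description precedes it below -/
import Mathlib

section
/- Let d_2, ..., d_{K+1} be a sequence of real numbers and a, b, c > 0 be constants such that for every k in [K], d_{k+1} ≤ a/k + b(1 + log k) + c · Σ_{ℓ=2}^{k} d_ℓ/(k - ℓ + 2). Then for every k in [K], d_{k+1} ≤ (a/k + b(1 + log k)) · Σ_{i=0}^{k-1} (2c(1 + log k))^i. -/
-- helper: harmonic bound
lemma harm_le (n : ℕ) : ∑ m ∈ Finset.Icc 1 n, (1:ℝ)/(m:ℝ) ≤ 1 + Real.log n := by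
  have h := harmonic_le_one_add_log n
  have : ((harmonic n : ℚ) : ℝ) = ∑ m ∈ Finset.Icc 1 n, (1:ℝ)/(m:ℝ) := by
    rw [harmonic_eq_sum_Icc]
    push_cast
    simp [one_div]
  linarith [this ▸ h]

lemma harm_tail (k : ℕ) (hk : 1 ≤ k) : ∑ j ∈ Finset.Icc 2 k, (1:ℝ)/(j:ℝ) ≤ Real.log k := by
  have h := harm_le k
  have : ∑ m ∈ Finset.Icc 1 k, (1:ℝ)/(m:ℝ)
      = 1 + ∑ j ∈ Finset.Icc 2 k, (1:ℝ)/(j:ℝ) := by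
    rw [← Finset.sum_erase_add _ _ (show 1 ∈ Finset.Icc 1 k by simp [hk])]
    have : (Finset.Icc 1 k).erase 1 = Finset.Icc 2 k := by
      ext x; simp [Finset.mem_erase, Finset.mem_Icc]; omega
    rw [this]; simp [add_comm]
  linarith [this ▸ h]

lemma reidx2 (k : ℕ) : ∑ ℓ ∈ Finset.Icc 2 k, (1:ℝ)/((k:ℝ)-ℓ+2) = ∑ j ∈ Finset.Icc 2 k, (1:ℝ)/(j:ℝ) := by
  apply Finset.sum_nbij' (i := fun ℓ => k - ℓ + 2) (j := fun j => k - j + 2)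
  · intro a ha; simp only [Finset.mem_Icc] at *; omega
  · intro a ha; simp only [Finset.mem_Icc] at *; omega
  · intro a ha; simp only [Finset.mem_Icc] at ha; omega
  · intro a ha; simp only [Finset.mem_Icc] at ha; omega
  · intro a ha; simp only [Finset.mem_Icc] at ha
    congr 1
    push_cast [Nat.cast_sub ha.2]
    ring

lemma reidx1 (k : ℕ) : ∑ ℓ ∈ Finset.Icc 2 k, (1:ℝ)/((ℓ:ℝ)-1) = ∑ m ∈ Finset.Icc 1 (k-1), (1:ℝ)/(m:ℝ) := by
  apply Finset.sum_nbij' (i := fun ℓ => ℓ - 1) (j := fun m => m + 1)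
  · intro a ha; simp only [Finset.mem_Icc] at *; omega
  · intro a ha; simp only [Finset.mem_Icc] at *; omega
  · intro a ha; simp only [Finset.mem_Icc] at ha; omega
  · intro a ha; simp only [Finset.mem_Icc] at ha; omega
  · intro a ha; simp only [Finset.mem_Icc] at ha
    congr 1
    push_cast [Nat.cast_sub (show 1 ≤ a by omega)]
    ring

set_option maxHeartbeats 1600000 in
theorem stmt_0 (K : ℕ) (hK : 1 ≤ K) (d : ℕ → ℝ) (a b c : ℝ)
    (ha : 0 < a) (hb : 0 < b) (hc : 0 < c)
    (h : ∀ k ∈ Finset.Icc 1 K,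
      d (k + 1) ≤ a / k + b * (1 + Real.log k)
        + c * ∑ ℓ ∈ Finset.Icc 2 k, d ℓ / ((k : ℝ) - ℓ + 2)) :
    ∀ k ∈ Finset.Icc 1 K,
      d (k + 1) ≤ (a / k + b * (1 + Real.log k))
        * ∑ i ∈ Finset.range k, (2 * c * (1 + Real.log k)) ^ i := by
  intro k
  induction k using Nat.strong_induction_on with
  | _ k IH =>
  intro hk
  simp only [Finset.mem_Icc] at hk
  obtain ⟨hk1, hkK⟩ := hk
  have hd := h k (by simp [Finset.mem_Icc]; omega)
  rcases eq_or_lt_of_le hk1 with h1 | h2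
  · -- k = 1
    subst h1
    simpa [Finset.Icc_eq_empty_of_lt] using hd
  · -- 2 ≤ k
    have hk2 : 2 ≤ k := h2
    have hkR : (1:ℝ) ≤ (k:ℝ) := by exact_mod_cast hk1
    have hkpos : (0:ℝ) < (k:ℝ) := by linarith
    set L := Real.log k with hLdef
    have hL0 : 0 ≤ L := Real.log_nonneg hkR
    set x := 2 * c * (1 + L) with hxdef
    have hx0 : 0 ≤ x := by positivity
    set T := ∑ i ∈ Finset.range (k-1), x ^ i with hTdef
    have hT0 : 0 ≤ T := Finset.sum_nonneg fun i _ => pow_nonneg hx0 i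
    set A := a / k + b * (1 + L) with hAdef
    have hA0 : 0 < A := by positivity
    clear_value L x T A
    -- per-term bound
    have key : ∀ ℓ ∈ Finset.Icc 2 k,
        d ℓ / ((k:ℝ) - ℓ + 2) ≤ (a / ((ℓ:ℝ)-1) + b * (1 + L)) * T / ((k:ℝ) - ℓ + 2) := by
      intro ℓ hℓ
      simp only [Finset.mem_Icc] at hℓ
      obtain ⟨hℓ2, hℓk⟩ := hℓ
      have hℓR : (2:ℝ) ≤ (ℓ:ℝ) := by exact_mod_cast hℓ2
      have hℓkR : (ℓ:ℝ) ≤ (k:ℝ) := by exact_mod_cast hℓk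
      have hden : (0:ℝ) < (k:ℝ) - ℓ + 2 := by linarith
      set m := ℓ - 1 with hmdef
      have hm1 : 1 ≤ m := by omega
      have hmk : m < k := by omega
      have hmc : ((m:ℕ):ℝ) = (ℓ:ℝ) - 1 := by
        push_cast [hmdef, Nat.cast_sub (show 1 ≤ ℓ by omega)]; ring
      have hIH := IH m hmk (by simp [Finset.mem_Icc]; omega)
      rw [show m + 1 = ℓ by omega] at hIH
      have hlogm : Real.log m ≤ L := by
        rw [hLdef]
        apply Real.log_le_log (by exact_mod_cast hm1)
        exact_mod_cast Nat.le_of_lt hmk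
      have hlogm0 : 0 ≤ Real.log m := Real.log_nonneg (by exact_mod_cast hm1)
      have hsum1 : ∑ i ∈ Finset.range m, (2 * c * (1 + Real.log m)) ^ i ≤ T := by
        calc ∑ i ∈ Finset.range m, (2 * c * (1 + Real.log m)) ^ i
            ≤ ∑ i ∈ Finset.range m, x ^ i := by
              apply Finset.sum_le_sum
              intro i _
              apply pow_le_pow_left₀ (by positivity)
              rw [hxdef]; nlinarith
          _ ≤ T := by
              rw [hTdef]
              apply Finset.sum_le_sum_of_subset_of_nonneg
              · exact Finset.range_subset_range.2 (by omega)
              · intro i _ _; exact pow_nonneg hx0 i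
      have hfac : a / (m:ℝ) + b * (1 + Real.log m) ≤ a / ((ℓ:ℝ)-1) + b * (1 + L) := by
        rw [hmc] at hlogm ⊢
        nlinarith
      have hdℓ : d ℓ ≤ (a / ((ℓ:ℝ)-1) + b * (1 + L)) * T := by
        refine hIH.trans (mul_le_mul hfac hsum1 ?_ ?_)
        · exact Finset.sum_nonneg fun i _ => pow_nonneg (by positivity) i
        · have : (0:ℝ) < (ℓ:ℝ) - 1 := by linarith
          positivity
      exact div_le_div_of_nonneg_right hdℓ hden.le |>.trans_eq rfl
    -- sum bound
    have hS2 : ∑ ℓ ∈ Finset.Icc 2 k, (1:ℝ)/((k:ℝ)-ℓ+2) ≤ L := by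
      rw [hLdef]
      exact (reidx2 k).le.trans (harm_tail k hk1)
    have hS1 : ∑ ℓ ∈ Finset.Icc 2 k, (1:ℝ)/(((ℓ:ℝ)-1) * ((k:ℝ)-ℓ+2)) ≤ 2 * (1 + L) / k := by
      have hsplit : ∀ ℓ ∈ Finset.Icc 2 k,
          (1:ℝ)/(((ℓ:ℝ)-1) * ((k:ℝ)-ℓ+2))
            = (1/((k:ℝ)+1)) * ((1:ℝ)/((ℓ:ℝ)-1) + (1:ℝ)/((k:ℝ)-ℓ+2)) := by
        intro ℓ hℓ
        simp only [Finset.mem_Icc] at hℓ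
        have h1 : (2:ℝ) ≤ (ℓ:ℝ) := by exact_mod_cast hℓ.1
        have h2 : (ℓ:ℝ) ≤ (k:ℝ) := by exact_mod_cast hℓ.2
        have e1 : (ℓ:ℝ) - 1 ≠ 0 := by linarith
        have e2 : (k:ℝ) - ℓ + 2 ≠ 0 := by linarith
        have e3 : (k:ℝ) + 1 ≠ 0 := by linarith
        field_simp
        ring
      rw [Finset.sum_congr rfl hsplit, ← Finset.mul_sum, Finset.sum_add_distrib]
      have b1 : ∑ ℓ ∈ Finset.Icc 2 k, (1:ℝ)/((ℓ:ℝ)-1) ≤ 1 + L := by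
        rw [reidx1 k]
        refine (harm_le (k-1)).trans ?_
        have : Real.log (k-1 : ℕ) ≤ L := by
          rw [hLdef]
          apply Real.log_le_log (by exact_mod_cast (show 1 ≤ k - 1 by omega)) <;>
          exact_mod_cast Nat.sub_le k 1
        linarith
      have hk1R : (0:ℝ) < (k:ℝ) + 1 := by linarith
      calc (1/((k:ℝ)+1)) * ((∑ ℓ ∈ Finset.Icc 2 k, (1:ℝ)/((ℓ:ℝ)-1)) + ∑ ℓ ∈ Finset.Icc 2 k, (1:ℝ)/((k:ℝ)-ℓ+2))
          ≤ (1/((k:ℝ)+1)) * ((1 + L) + L) := by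
            apply mul_le_mul_of_nonneg_left (by linarith) (by positivity)
        _ ≤ 2 * (1 + L) / k := by
            rw [one_div, inv_mul_eq_div, div_le_div_iff₀ hk1R hkpos]
            nlinarith
    have step2 : ∑ ℓ ∈ Finset.Icc 2 k, (a / ((ℓ:ℝ)-1) + b * (1 + L)) * T / ((k:ℝ) - ℓ + 2)
        = T * (a * ∑ ℓ ∈ Finset.Icc 2 k, (1:ℝ)/(((ℓ:ℝ)-1) * ((k:ℝ)-ℓ+2)))
          + T * (b * (1+L) * ∑ ℓ ∈ Finset.Icc 2 k, (1:ℝ)/((k:ℝ)-ℓ+2)) := by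
      simp only [Finset.mul_sum, ← Finset.sum_add_distrib]
      apply Finset.sum_congr rfl
      intro ℓ hℓ
      simp only [Finset.mem_Icc] at hℓ
      have h1 : (2:ℝ) ≤ (ℓ:ℝ) := by exact_mod_cast hℓ.1
      have h2 : (ℓ:ℝ) ≤ (k:ℝ) := by exact_mod_cast hℓ.2
      have e1 : (ℓ:ℝ) - 1 ≠ 0 := by linarith
      have e2 : (k:ℝ) - ℓ + 2 ≠ 0 := by linarith
      field_simp
    have hchain : ∑ ℓ ∈ Finset.Icc 2 k, d ℓ / ((k:ℝ) - ℓ + 2) ≤ 2 * (1 + L) * (A * T) := by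
      calc ∑ ℓ ∈ Finset.Icc 2 k, d ℓ / ((k:ℝ) - ℓ + 2)
          ≤ ∑ ℓ ∈ Finset.Icc 2 k, (a / ((ℓ:ℝ)-1) + b * (1 + L)) * T / ((k:ℝ) - ℓ + 2) :=
            Finset.sum_le_sum key
        _ = T * (a * ∑ ℓ ∈ Finset.Icc 2 k, (1:ℝ)/(((ℓ:ℝ)-1) * ((k:ℝ)-ℓ+2)))
              + T * (b * (1+L) * ∑ ℓ ∈ Finset.Icc 2 k, (1:ℝ)/((k:ℝ)-ℓ+2)) := step2
        _ ≤ T * (a * (2 * (1 + L) / k)) + T * (b * (1+L) * L) := by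
            refine add_le_add ?_ ?_
            · exact mul_le_mul_of_nonneg_left (mul_le_mul_of_nonneg_left hS1 ha.le) hT0
            · refine mul_le_mul_of_nonneg_left (mul_le_mul_of_nonneg_left hS2 ?_) hT0
              positivity
        _ ≤ 2 * (1 + L) * (A * T) := by
            have h1L : (0:ℝ) ≤ 1 + L := by linarith
            have key2 : b * (1+L) * L ≤ 2 * (1+L) * (b*(1+L)) := by
              nlinarith [mul_nonneg (mul_nonneg hb.le h1L) (show (0:ℝ) ≤ 2 + L by linarith)]
            have hsc : a * (2 * (1 + L) / (k:ℝ)) + b * (1+L) * L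
                ≤ 2 * (1+L) * (a/(k:ℝ) + b*(1+L)) := by
              have e : a * (2 * (1 + L) / (k:ℝ)) = 2 * (1+L) * (a/(k:ℝ)) := by ring
              rw [e, mul_add]
              linarith
            calc T * (a * (2 * (1 + L) / (k:ℝ))) + T * (b * (1+L) * L)
                = T * (a * (2 * (1 + L) / (k:ℝ)) + b * (1+L) * L) := by ring
              _ ≤ T * (2 * (1+L) * (a/(k:ℝ) + b*(1+L))) := mul_le_mul_of_nonneg_left hsc hT0
              _ = 2 * (1 + L) * (A * T) := by rw [hAdef]; ring
    have hgeo : ∑ i ∈ Finset.range k, x ^ i = x * T + 1 := by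
      rw [show k = (k-1)+1 by omega]
      rw [geom_sum_succ, ← hTdef]
    calc d (k+1) ≤ A + c * ∑ ℓ ∈ Finset.Icc 2 k, d ℓ / ((k:ℝ) - ℓ + 2) := hd
      _ ≤ A + c * (2 * (1 + L) * (A * T)) := by
          have := mul_le_mul_of_nonneg_left hchain hc.le
          linarith
      _ = A * (x * T + 1) := by rw [hxdef]; ring
      _ = A * ∑ i ∈ Finset.range k, x ^ i := by rw [hgeo]
end

section
/- Let f_1, ..., f_n : ℝ^d → ℝ with n ≥ 2 and x_* ∈ ℝ^d, with L_i > 0 for each i. Let f = (1/n)Σ f_i, L̄ = (1/n)Σ L_i, σ²_any = (1/n)Σ‖∇f_i(x_*)‖², and σ²_rand = σ²_any + n‖∇f(x_*)‖². If σ is a permutation of [n] sampled uniformly at random, then E[Σ_{i=2}^n (L_{σ(i)}/n)·‖Σ_{j=1}^{i-1} ∇f_{σ(j)}(x_*)‖²] ≤ (2/3) n L̄ σ²_rand. -/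
open Finset

local notation "⟪" x ", " y "⟫" => @inner ℝ _ _ x y




private lemma my_sum_erase_comp {n : ℕ} {M : Type*} [AddCommMonoid M] (σ : Equiv.Perm (Fin n))
    (a : Fin n) (h : Fin n → M) :
    ∑ b ∈ univ.erase a, h (σ b) = ∑ b ∈ univ.erase (σ a), h b := by
  rw [show univ.erase (σ a) = (univ.erase a).map σ.toEmbedding by
    rw [Finset.map_erase, Finset.map_univ_equiv]; rfl, Finset.sum_map]
  rfl

private lemma my_sum_erase2_comp {n : ℕ} {M : Type*} [AddCommMonoid M] (σ : Equiv.Perm (Fin n))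
    (a b : Fin n) (h : Fin n → M) :
    ∑ c ∈ (univ.erase a).erase b, h (σ c) = ∑ c ∈ (univ.erase (σ a)).erase (σ b), h c := by
  rw [show (univ.erase (σ a)).erase (σ b) = ((univ.erase a).erase b).map σ.toEmbedding by
    rw [Finset.map_erase, Finset.map_erase, Finset.map_univ_equiv]; rfl, Finset.sum_map]
  rfl

private lemma my_exists_perm2 {n : ℕ} (i j i' j' : Fin n) (hij : i ≠ j) (hij' : i' ≠ j') :
    ∃ π : Equiv.Perm (Fin n), π i' = i ∧ π j' = j := by
  refine ⟨(Equiv.swap i' i).trans (Equiv.swap ((Equiv.swap i' i) j') j), ?_, ?_⟩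
  · rw [Equiv.trans_apply, Equiv.swap_apply_left]
    refine Equiv.swap_apply_of_ne_of_ne ?_ hij
    intro h
    exact hij' ((Equiv.swap i' i).injective (by rw [Equiv.swap_apply_left, ← h]))
  · rw [Equiv.trans_apply, Equiv.swap_apply_left]

private lemma my_exists_perm3 {n : ℕ} (i j k i' j' k' : Fin n)
    (h1 : i ≠ j) (h2 : i ≠ k) (h3 : j ≠ k) (h1' : i' ≠ j') (h2' : i' ≠ k') (h3' : j' ≠ k') :
    ∃ π : Equiv.Perm (Fin n), π i' = i ∧ π j' = j ∧ π k' = k := by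
  obtain ⟨ρ, hρ1, hρ2⟩ := my_exists_perm2 i j i' j' h1 h1'
  refine ⟨ρ.trans (Equiv.swap (ρ k') k), ?_, ?_, ?_⟩
  · rw [Equiv.trans_apply, hρ1]
    refine Equiv.swap_apply_of_ne_of_ne ?_ h2
    intro h
    exact h2' (ρ.injective (hρ1.trans h))
  · rw [Equiv.trans_apply, hρ2]
    refine Equiv.swap_apply_of_ne_of_ne ?_ h3
    intro h
    exact h3' (ρ.injective (hρ2.trans h))
  · rw [Equiv.trans_apply, Equiv.swap_apply_left]

private lemma my_sumPerm2 {n : ℕ} (F : Fin n → Fin n → ℝ) {i j i' j' : Fin n}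
    (hij : i ≠ j) (hij' : i' ≠ j') :
    ∑ σ : Equiv.Perm (Fin n), F (σ i) (σ j) = ∑ σ : Equiv.Perm (Fin n), F (σ i') (σ j') := by
  obtain ⟨π, h1, h2⟩ := my_exists_perm2 i j i' j' hij hij'
  calc ∑ σ : Equiv.Perm (Fin n), F (σ i) (σ j)
      = ∑ σ : Equiv.Perm (Fin n), F ((Equiv.mulRight π σ) i') ((Equiv.mulRight π σ) j') := by
        refine Finset.sum_congr rfl fun σ _ => ?_
        simp [Equiv.Perm.mul_apply, h1, h2]
    _ = ∑ σ : Equiv.Perm (Fin n), F (σ i') (σ j') :=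
        Equiv.sum_comp (Equiv.mulRight π) (fun σ => F (σ i') (σ j'))

private lemma my_sumPerm3 {n : ℕ} (F : Fin n → Fin n → Fin n → ℝ) {i j k i' j' k' : Fin n}
    (h1 : i ≠ j) (h2 : i ≠ k) (h3 : j ≠ k) (h1' : i' ≠ j') (h2' : i' ≠ k') (h3' : j' ≠ k') :
    ∑ σ : Equiv.Perm (Fin n), F (σ i) (σ j) (σ k)
      = ∑ σ : Equiv.Perm (Fin n), F (σ i') (σ j') (σ k') := by
  obtain ⟨π, hπ1, hπ2, hπ3⟩ := my_exists_perm3 i j k i' j' k' h1 h2 h3 h1' h2' h3'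
  calc ∑ σ : Equiv.Perm (Fin n), F (σ i) (σ j) (σ k)
      = ∑ σ : Equiv.Perm (Fin n),
          F ((Equiv.mulRight π σ) i') ((Equiv.mulRight π σ) j') ((Equiv.mulRight π σ) k') := by
        refine Finset.sum_congr rfl fun σ _ => ?_
        simp [Equiv.Perm.mul_apply, hπ1, hπ2, hπ3]
    _ = _ := Equiv.sum_comp (Equiv.mulRight π) (fun σ => F (σ i') (σ j') (σ k'))


private lemma my_P2 {n : ℕ} (F : Fin n → Fin n → ℝ) {i j : Fin n} (hij : i ≠ j) :
    ((n : ℝ) * ((n : ℝ) - 1)) * ∑ σ : Equiv.Perm (Fin n), F (σ i) (σ j)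
      = (Fintype.card (Equiv.Perm (Fin n)) : ℝ) * ∑ a : Fin n, ∑ b ∈ univ.erase a, F a b := by
  have h2n : 2 ≤ n := by
    rw [← Fintype.card_fin n]
    exact Fintype.one_lt_card_iff.mpr ⟨i, j, hij⟩
  have hcount : ∀ a : Fin n, (univ.erase a).card = n - 1 := fun a => by
    rw [Finset.card_erase_of_mem (mem_univ a), Finset.card_univ, Fintype.card_fin]
  calc ((n : ℝ) * ((n : ℝ) - 1)) * ∑ σ : Equiv.Perm (Fin n), F (σ i) (σ j)
      = ∑ a : Fin n, ∑ b ∈ univ.erase a, ∑ σ : Equiv.Perm (Fin n), F (σ i) (σ j) := by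
        simp only [Finset.sum_const, hcount, smul_smul, Finset.card_univ, Fintype.card_fin,
          nsmul_eq_mul]
        push_cast [Nat.cast_sub (by omega : 1 ≤ n)]
        ring
    _ = ∑ a : Fin n, ∑ b ∈ univ.erase a, ∑ σ : Equiv.Perm (Fin n), F (σ a) (σ b) := by
        refine Finset.sum_congr rfl fun a _ => Finset.sum_congr rfl fun b hb => ?_
        exact (my_sumPerm2 F (Finset.ne_of_mem_erase hb).symm hij).symm
    _ = ∑ σ : Equiv.Perm (Fin n), ∑ a : Fin n, ∑ b ∈ univ.erase a, F (σ a) (σ b) := by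
        rw [Finset.sum_comm]
        exact Finset.sum_congr rfl fun σ _ => Finset.sum_comm
    _ = ∑ σ : Equiv.Perm (Fin n), ∑ a : Fin n, ∑ b ∈ univ.erase a, F a b := by
        refine Finset.sum_congr rfl fun σ _ => ?_
        calc ∑ a : Fin n, ∑ b ∈ univ.erase a, F (σ a) (σ b)
            = ∑ a : Fin n, (fun x => ∑ b ∈ univ.erase x, F x b) (σ a) :=
              Finset.sum_congr rfl (fun a _ => my_sum_erase_comp σ a (F (σ a)))
          _ = _ := Equiv.sum_comp σ (fun x => ∑ b ∈ univ.erase x, F x b)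
    _ = (Fintype.card (Equiv.Perm (Fin n)) : ℝ) * ∑ a : Fin n, ∑ b ∈ univ.erase a, F a b := by
        rw [Finset.sum_const, Finset.card_univ, nsmul_eq_mul]

private lemma my_P3 {n : ℕ} (F : Fin n → Fin n → Fin n → ℝ) {i j k : Fin n}
    (hij : i ≠ j) (hik : i ≠ k) (hjk : j ≠ k) :
    ((n : ℝ) * ((n : ℝ) - 1) * ((n : ℝ) - 2)) * ∑ σ : Equiv.Perm (Fin n), F (σ i) (σ j) (σ k)
      = (Fintype.card (Equiv.Perm (Fin n)) : ℝ) *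
          ∑ a : Fin n, ∑ b ∈ univ.erase a, ∑ c ∈ (univ.erase a).erase b, F a b c := by
  have h3n : 3 ≤ n := by
    rw [show (3:ℕ) = 2 + 1 by rfl, ← Fintype.card_fin n]
    exact Fintype.two_lt_card_iff.mpr ⟨i, j, k, hij, hik, hjk⟩
  have hcount : ∀ a : Fin n, (univ.erase a).card = n - 1 := fun a => by
    rw [Finset.card_erase_of_mem (mem_univ a), Finset.card_univ, Fintype.card_fin]
  have hcount2 : ∀ a : Fin n, ∀ b ∈ univ.erase a, ((univ.erase a).erase b).card = n - 2 :=
    fun a b hb => by rw [Finset.card_erase_of_mem hb, hcount, Nat.sub_sub]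
  calc ((n : ℝ) * ((n : ℝ) - 1) * ((n : ℝ) - 2)) * ∑ σ : Equiv.Perm (Fin n), F (σ i) (σ j) (σ k)
      = ∑ a : Fin n, ∑ b ∈ univ.erase a, ∑ c ∈ (univ.erase a).erase b,
          ∑ σ : Equiv.Perm (Fin n), F (σ i) (σ j) (σ k) := by
        rw [Finset.sum_congr rfl (fun a (ha : a ∈ univ) => Finset.sum_congr rfl
          (fun b hb => by rw [Finset.sum_const, hcount2 a b hb]))]
        simp only [Finset.sum_const, hcount, smul_smul, Finset.card_univ, Fintype.card_fin,
          nsmul_eq_mul]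
        push_cast [Nat.cast_sub (by omega : 1 ≤ n), Nat.cast_sub (by omega : 2 ≤ n)]
        ring
    _ = ∑ a : Fin n, ∑ b ∈ univ.erase a, ∑ c ∈ (univ.erase a).erase b,
          ∑ σ : Equiv.Perm (Fin n), F (σ a) (σ b) (σ c) := by
        refine Finset.sum_congr rfl fun a _ => Finset.sum_congr rfl fun b hb =>
          Finset.sum_congr rfl fun c hc => ?_
        have hba : b ≠ a := Finset.ne_of_mem_erase hb
        have hcb : c ≠ b := Finset.ne_of_mem_erase hc
        have hca : c ≠ a := Finset.ne_of_mem_erase (Finset.mem_of_mem_erase hc)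
        exact (my_sumPerm3 F hba.symm hca.symm hcb.symm hij hik hjk).symm
    _ = ∑ σ : Equiv.Perm (Fin n), ∑ a : Fin n, ∑ b ∈ univ.erase a,
          ∑ c ∈ (univ.erase a).erase b, F (σ a) (σ b) (σ c) := by
        rw [Finset.sum_comm]
        refine Finset.sum_congr rfl fun σ _ => ?_
        rw [Finset.sum_comm]
        exact Finset.sum_congr rfl fun a _ => Finset.sum_comm
    _ = ∑ σ : Equiv.Perm (Fin n), ∑ a : Fin n, ∑ b ∈ univ.erase a,
          ∑ c ∈ (univ.erase a).erase b, F a b c := by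
        refine Finset.sum_congr rfl fun σ _ => ?_
        calc ∑ a : Fin n, ∑ b ∈ univ.erase a, ∑ c ∈ (univ.erase a).erase b, F (σ a) (σ b) (σ c)
            = ∑ a : Fin n, ∑ b ∈ univ.erase a,
                ∑ c ∈ (univ.erase (σ a)).erase (σ b), F (σ a) (σ b) c :=
              Finset.sum_congr rfl fun a _ => Finset.sum_congr rfl fun b _ =>
                my_sum_erase2_comp σ a b _
          _ = ∑ a : Fin n, (fun x => ∑ b ∈ univ.erase x,
                ∑ c ∈ (univ.erase x).erase b, F x b c) (σ a) := by
              refine Finset.sum_congr rfl fun a _ => ?_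
              exact my_sum_erase_comp σ a
                (fun b => ∑ c ∈ (univ.erase (σ a)).erase b, F (σ a) b c)
          _ = _ := Equiv.sum_comp σ
                (fun x => ∑ b ∈ univ.erase x, ∑ c ∈ (univ.erase x).erase b, F x b c)
    _ = _ := by rw [Finset.sum_const, Finset.card_univ, nsmul_eq_mul]



private lemma my_expand {E' : Type*} [NormedAddCommGroup E'] [InnerProductSpace ℝ E']
    {ι : Type*} [DecidableEq ι] (c : ℝ) (s : Finset ι) (v : ι → E') :
    c * ‖∑ j ∈ s, v j‖^2
      = (∑ j ∈ s, c * ‖v j‖^2) + ∑ j ∈ s, ∑ j' ∈ s.erase j, c * ⟪v j, v j'⟫ := by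
  have h : ‖∑ j ∈ s, v j‖^2
      = (∑ j ∈ s, ‖v j‖^2) + ∑ j ∈ s, ∑ j' ∈ s.erase j, ⟪v j, v j'⟫ := by
    rw [← real_inner_self_eq_norm_sq, sum_inner, ← Finset.sum_add_distrib]
    refine Finset.sum_congr rfl fun j hj => ?_
    rw [inner_sum, ← Finset.add_sum_erase _ _ hj, real_inner_self_eq_norm_sq]
  rw [h, mul_add, Finset.mul_sum, Finset.mul_sum]
  congr 1
  exact Finset.sum_congr rfl fun j _ => Finset.mul_sum _ _ _

private lemma my_kk1 (n : ℕ) : (∑ i ∈ Finset.range n, i * (i - 1)) * 3 = n * (n-1) * (n-2) := by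
  induction n with
  | zero => simp
  | succ m ih =>
    rw [Finset.sum_range_succ, add_mul, ih]
    rcases m with _ | m
    · simp
    rcases m with _ | m
    · decide
    · have e1 : m + 1 + 1 - 1 = m + 1 := rfl
      have e2 : m + 1 + 1 - 2 = m := rfl
      have e3 : m + 1 + 1 + 1 - 1 = m + 1 + 1 := rfl
      have e4 : m + 1 + 1 + 1 - 2 = m + 1 := rfl
      rw [e1, e2, e3, e4]
      ring



theorem stmt_3 {dim n : ℕ} (hn : 2 ≤ n)
    (f : Fin n → EuclideanSpace ℝ (Fin dim) → ℝ)
    (f' : Fin n → EuclideanSpace ℝ (Fin dim) → EuclideanSpace ℝ (Fin dim))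
    (hgrad : ∀ i x, HasGradientAt (f i) (f' i x) x)
    (xstar : EuclideanSpace ℝ (Fin dim))
    (L : Fin n → ℝ) (hL : ∀ i, 0 < L i) :
    (1 / (Fintype.card (Equiv.Perm (Fin n)) : ℝ)) *
      ∑ σ : Equiv.Perm (Fin n),
        ∑ i : Fin n, (L (σ i) / n) *
          ‖∑ j ∈ Finset.univ.filter (fun j => j < i), f' (σ j) xstar‖ ^ 2
      ≤ (2 / 3) * n * ((1 / n) * ∑ i : Fin n, L i)
        * (((1 / n) * ∑ i : Fin n, ‖f' i xstar‖ ^ 2)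
            + n * ‖(n : ℝ)⁻¹ • ∑ i : Fin n, f' i xstar‖ ^ 2) := by
  classical
  have hn0 : (0:ℝ) < n := by exact_mod_cast (by omega : 0 < n)
  have h2r : (2:ℝ) ≤ (n:ℝ) := by exact_mod_cast hn
  have hnn : ((n:ℝ) * ((n:ℝ)-1)) ≠ 0 := by nlinarith
  set N : ℝ := (Fintype.card (Equiv.Perm (Fin n)) : ℝ) with hNdef
  have hNpos : (0:ℝ) < N := by
    rw [hNdef]; exact_mod_cast Fintype.card_pos
  set A := ∑ i : Fin n, L i with hA
  set P := ∑ i : Fin n, ‖f' i xstar‖^2 with hP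
  set Gv := ∑ i : Fin n, f' i xstar with hGv
  set Q := ∑ a : Fin n, L a * ‖f' a xstar‖^2 with hQ
  set GH := ∑ a : Fin n, L a * ⟪Gv, f' a xstar⟫ with hGH
  set X := ∑ a : Fin n, ∑ b ∈ univ.erase a, L a * ‖f' b xstar‖^2 with hX
  set Y := ∑ a : Fin n, ∑ b ∈ univ.erase a, ∑ c ∈ (univ.erase a).erase b,
      L a * ⟪f' b xstar, f' c xstar⟫ with hY
  have hcard : ∀ i : Fin n, (univ.filter (fun j => j < i)).card = (i : ℕ) := by
    intro i
    rw [show univ.filter (fun j => j < i) = Finset.Iio i by ext x; simp, Fin.card_Iio]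
  -- step 1 : first piece
  have hs1 : ∑ i : Fin n, ((i : ℕ) : ℝ) = (n:ℝ) * ((n:ℝ)-1) / 2 := by
    have h := Finset.sum_range_id_mul_two n
    have h2 : ∑ i : Fin n, (i : ℕ) = ∑ i ∈ Finset.range n, i :=
      Fin.sum_univ_eq_sum_range (fun i => i) n
    rw [eq_div_iff (two_ne_zero)]
    calc (∑ i : Fin n, ((i:ℕ):ℝ)) * 2 = (((∑ i : Fin n, (i:ℕ)) * 2 : ℕ) : ℝ) := by push_cast; ring
      _ = ((n * (n-1) : ℕ) : ℝ) := by rw [h2, h]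
      _ = (n:ℝ) * ((n:ℝ)-1) := by
          rw [Nat.cast_mul, Nat.cast_sub (by omega : 1 ≤ n)]; norm_num
  have hT1 : (∑ σ : Equiv.Perm (Fin n), ∑ i : Fin n, ∑ j ∈ univ.filter (fun j => j < i),
      L (σ i) * ‖f' (σ j) xstar‖^2) = N * X / 2 := by
    have hinner : ∀ (i : Fin n), ∀ j ∈ univ.filter (fun j => j < i),
        (∑ σ : Equiv.Perm (Fin n), L (σ i) * ‖f' (σ j) xstar‖^2)
          = N * X / ((n:ℝ)*((n:ℝ)-1)) := by
      intro i j hj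
      have hji : i ≠ j := (ne_of_lt (mem_filter.mp hj).2).symm
      have h := my_P2 (fun a b => L a * ‖f' b xstar‖^2) hji
      rw [eq_div_iff hnn, mul_comm _ ((n:ℝ)*((n:ℝ)-1))]
      exact h
    calc (∑ σ : Equiv.Perm (Fin n), ∑ i : Fin n, ∑ j ∈ univ.filter (fun j => j < i),
          L (σ i) * ‖f' (σ j) xstar‖^2)
        = ∑ i : Fin n, ∑ j ∈ univ.filter (fun j => j < i),
            ∑ σ : Equiv.Perm (Fin n), L (σ i) * ‖f' (σ j) xstar‖^2 := by
          rw [Finset.sum_comm]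
          exact Finset.sum_congr rfl fun i _ => Finset.sum_comm
      _ = ∑ i : Fin n, ∑ j ∈ univ.filter (fun j => j < i), N * X / ((n:ℝ)*((n:ℝ)-1)) :=
          Finset.sum_congr rfl fun i _ => Finset.sum_congr rfl (hinner i)
      _ = ∑ i : Fin n, ((i:ℕ):ℝ) * (N * X / ((n:ℝ)*((n:ℝ)-1))) := by
          refine Finset.sum_congr rfl fun i _ => ?_
          rw [Finset.sum_const, hcard i, nsmul_eq_mul]
      _ = (∑ i : Fin n, ((i:ℕ):ℝ)) * (N * X / ((n:ℝ)*((n:ℝ)-1))) := by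
          rw [← Finset.sum_mul]
      _ = N * X / 2 := by
          rw [hs1]; have h1 : (n:ℝ) - 1 ≠ 0 := by linarith
          field_simp
  have hT2 : (∑ σ : Equiv.Perm (Fin n), ∑ i : Fin n, ∑ j ∈ univ.filter (fun j => j < i),
      ∑ j' ∈ (univ.filter (fun j => j < i)).erase j,
        L (σ i) * ⟪f' (σ j) xstar, f' (σ j') xstar⟫) = N * Y / 3 := by
    by_cases h3 : 3 ≤ n
    · have h3r : (3:ℝ) ≤ (n:ℝ) := by exact_mod_cast h3
      have hd3 : ((n:ℝ) * ((n:ℝ)-1) * ((n:ℝ)-2)) ≠ 0 :=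
        ne_of_gt (mul_pos (mul_pos hn0 (by linarith)) (by linarith))
      have hinner : ∀ (i : Fin n), ∀ j ∈ univ.filter (fun j => j < i),
          ∀ j' ∈ (univ.filter (fun j => j < i)).erase j,
          (∑ σ : Equiv.Perm (Fin n), L (σ i) * ⟪f' (σ j) xstar, f' (σ j') xstar⟫)
            = N * Y / ((n:ℝ) * ((n:ℝ)-1) * ((n:ℝ)-2)) := by
        intro i j hj j' hj'
        have hji : i ≠ j := (ne_of_lt (mem_filter.mp hj).2).symm
        have hj'i : i ≠ j' :=
          (ne_of_lt (mem_filter.mp (Finset.mem_of_mem_erase hj')).2).symm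
        have hjj' : j ≠ j' := (Finset.ne_of_mem_erase hj').symm
        have h := my_P3 (fun a b c => L a * ⟪f' b xstar, f' c xstar⟫) hji hj'i hjj'
        rw [eq_div_iff hd3, mul_comm _ ((n:ℝ)*((n:ℝ)-1)*((n:ℝ)-2))]
        exact h
      have hs2 : ∑ i : Fin n, (((i : ℕ) * ((i:ℕ) - 1) : ℕ) : ℝ)
          = (n:ℝ) * ((n:ℝ)-1) * ((n:ℝ)-2) / 3 := by
        have h := my_kk1 n
        have h2 : ∑ i : Fin n, ((i : ℕ) * ((i:ℕ)-1)) = ∑ i ∈ Finset.range n, i * (i-1) :=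
          Fin.sum_univ_eq_sum_range (fun i => i * (i-1)) n
        rw [eq_div_iff (three_ne_zero)]
        calc (∑ i : Fin n, (((i:ℕ) * ((i:ℕ)-1) : ℕ):ℝ)) * 3
            = (((∑ i : Fin n, ((i:ℕ) * ((i:ℕ)-1))) * 3 : ℕ) : ℝ) := by push_cast; ring
          _ = ((n * (n-1) * (n-2) : ℕ) : ℝ) := by rw [h2, h]
          _ = (n:ℝ) * ((n:ℝ)-1) * ((n:ℝ)-2) := by
              rw [Nat.cast_mul, Nat.cast_mul, Nat.cast_sub (by omega : 1 ≤ n),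
                Nat.cast_sub (by omega : 2 ≤ n)]
              norm_num
      calc (∑ σ : Equiv.Perm (Fin n), ∑ i : Fin n, ∑ j ∈ univ.filter (fun j => j < i),
            ∑ j' ∈ (univ.filter (fun j => j < i)).erase j,
              L (σ i) * ⟪f' (σ j) xstar, f' (σ j') xstar⟫)
          = ∑ i : Fin n, ∑ j ∈ univ.filter (fun j => j < i),
              ∑ j' ∈ (univ.filter (fun j => j < i)).erase j,
                ∑ σ : Equiv.Perm (Fin n), L (σ i) * ⟪f' (σ j) xstar, f' (σ j') xstar⟫ := by
            rw [Finset.sum_comm]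
            refine Finset.sum_congr rfl fun i _ => ?_
            rw [Finset.sum_comm]
            exact Finset.sum_congr rfl fun j _ => Finset.sum_comm
        _ = ∑ i : Fin n, ∑ j ∈ univ.filter (fun j => j < i),
              ∑ j' ∈ (univ.filter (fun j => j < i)).erase j,
                N * Y / ((n:ℝ) * ((n:ℝ)-1) * ((n:ℝ)-2)) :=
            Finset.sum_congr rfl fun i _ => Finset.sum_congr rfl fun j hj =>
              Finset.sum_congr rfl (hinner i j hj)
        _ = ∑ i : Fin n, (((i : ℕ) * ((i:ℕ) - 1) : ℕ) : ℝ)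
              * (N * Y / ((n:ℝ) * ((n:ℝ)-1) * ((n:ℝ)-2))) := by
            refine Finset.sum_congr rfl fun i _ => ?_
            rw [Finset.sum_congr rfl (fun j hj => by
              rw [Finset.sum_const, Finset.card_erase_of_mem hj, hcard i] :
                ∀ j ∈ univ.filter (fun j => j < i), _ = ((i:ℕ) - 1 : ℕ) •
                  (N * Y / ((n:ℝ) * ((n:ℝ)-1) * ((n:ℝ)-2))))]
            rw [Finset.sum_const, hcard i, smul_smul, nsmul_eq_mul]
        _ = (∑ i : Fin n, (((i : ℕ) * ((i:ℕ) - 1) : ℕ) : ℝ))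
              * (N * Y / ((n:ℝ) * ((n:ℝ)-1) * ((n:ℝ)-2))) := by rw [← Finset.sum_mul]
        _ = N * Y / 3 := by
            rw [hs2]; have h1 : (n:ℝ) - 1 ≠ 0 := by linarith
            have h2 : (n:ℝ) - 2 ≠ 0 := by linarith
            field_simp
    · have hzero : ∀ (i j j' : Fin n), j < i → j' < i → j' ≠ j → False := by
        intro i j j' h1 h2 h12
        have : 2 < n := by
          rw [← Fintype.card_fin n]
          exact Fintype.two_lt_card_iff.mpr
            ⟨i, j, j', (ne_of_lt h1).symm, (ne_of_lt h2).symm, h12.symm⟩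
        omega
      have hYzero : Y = 0 := by
        rw [hY]
        refine Finset.sum_eq_zero fun a _ => Finset.sum_eq_zero fun b hb =>
          Finset.sum_eq_zero fun c hc => absurd ?_ h3
        have hba : b ≠ a := Finset.ne_of_mem_erase hb
        have hcb : c ≠ b := Finset.ne_of_mem_erase hc
        have hca : c ≠ a := Finset.ne_of_mem_erase (Finset.mem_of_mem_erase hc)
        rw [show (3:ℕ) = 2 + 1 by rfl, ← Fintype.card_fin n]
        exact Fintype.two_lt_card_iff.mpr ⟨a, b, c, hba.symm, hca.symm, hcb.symm⟩
      rw [hYzero, mul_zero, zero_div]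
      exact Finset.sum_eq_zero fun σ _ => Finset.sum_eq_zero fun i _ =>
        Finset.sum_eq_zero fun j hj => Finset.sum_eq_zero fun j' hj' =>
          absurd (hzero i j j' (mem_filter.mp hj).2
            (mem_filter.mp (Finset.mem_of_mem_erase hj')).2
            (Finset.ne_of_mem_erase hj')) not_false
  have hT0 : (∑ σ : Equiv.Perm (Fin n), ∑ i : Fin n,
      L (σ i) * ‖∑ j ∈ univ.filter (fun j => j < i), f' (σ j) xstar‖^2)
      = N * X / 2 + N * Y / 3 := by
    rw [← hT1, ← hT2, ← Finset.sum_add_distrib]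
    refine Finset.sum_congr rfl fun σ _ => ?_
    rw [← Finset.sum_add_distrib]
    exact Finset.sum_congr rfl fun i _ =>
      my_expand (L (σ i)) (univ.filter (fun j => j < i)) (fun j => f' (σ j) xstar)
  -- rewrite the LHS of the goal
  have hLHSeq : (1 / N) * (∑ σ : Equiv.Perm (Fin n), ∑ i : Fin n, (L (σ i) / n) *
      ‖∑ j ∈ univ.filter (fun j => j < i), f' (σ j) xstar‖^2) = (X / 2 + Y / 3) / n := by
    have hstep : ∀ σ : Equiv.Perm (Fin n),
        (∑ i : Fin n, (L (σ i) / n) *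
          ‖∑ j ∈ univ.filter (fun j => j < i), f' (σ j) xstar‖^2)
        = (∑ i : Fin n, L (σ i) *
            ‖∑ j ∈ univ.filter (fun j => j < i), f' (σ j) xstar‖^2) / n := by
      intro σ
      rw [Finset.sum_div]
      exact Finset.sum_congr rfl fun i _ => by ring
    rw [Finset.sum_congr rfl fun σ _ => hstep σ, ← Finset.sum_div, hT0]
    field_simp
  -- algebraic values of X and Y
  have hXval : X = A * P - Q := by
    rw [hX]
    calc (∑ a : Fin n, ∑ b ∈ univ.erase a, L a * ‖f' b xstar‖^2)
        = ∑ a : Fin n, (L a * P - L a * ‖f' a xstar‖^2) := by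
          refine Finset.sum_congr rfl fun a _ => ?_
          rw [← Finset.mul_sum, Finset.sum_erase_eq_sub (mem_univ a), ← hP, mul_sub]
      _ = A * P - Q := by
          rw [Finset.sum_sub_distrib, ← Finset.sum_mul, ← hA, ← hQ]
  have hYa : ∀ a : Fin n, (∑ b ∈ univ.erase a, ∑ c ∈ (univ.erase a).erase b,
      L a * ⟪f' b xstar, f' c xstar⟫)
      = L a * ‖Gv‖^2 - 2*(L a * ⟪Gv, f' a xstar⟫) + 2*(L a * ‖f' a xstar‖^2) - L a * P := by
    intro a
    have hb1 : ∀ b ∈ univ.erase a, (∑ c ∈ (univ.erase a).erase b,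
        L a * ⟪f' b xstar, f' c xstar⟫)
        = L a * ⟪f' b xstar, Gv - f' a xstar⟫ - L a * ‖f' b xstar‖^2 := by
      intro b hb
      rw [← Finset.mul_sum, ← inner_sum, Finset.sum_erase_eq_sub hb,
        Finset.sum_erase_eq_sub (mem_univ a), ← hGv, inner_sub_right,
        real_inner_self_eq_norm_sq]
      ring
    rw [Finset.sum_congr rfl hb1, Finset.sum_sub_distrib, ← Finset.mul_sum, ← Finset.mul_sum,
      ← sum_inner, Finset.sum_erase_eq_sub (mem_univ a),
      Finset.sum_erase_eq_sub (mem_univ a) (f := fun b => ‖f' b xstar‖^2), ← hGv, ← hP,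
      real_inner_self_eq_norm_sq, norm_sub_sq_real]
    ring
  have hYval : Y = A * ‖Gv‖^2 - 2*GH + 2*Q - A*P := by
    rw [hY, Finset.sum_congr rfl fun a _ => hYa a]
    rw [Finset.sum_sub_distrib, Finset.sum_add_distrib, Finset.sum_sub_distrib,
      ← Finset.sum_mul, ← Finset.sum_mul, ← Finset.mul_sum, ← Finset.mul_sum,
      ← hA, ← hQ, ← hGH]
  -- the two inequalities
  have hQP : Q ≤ A * P := by
    rw [hQ, hA]
    calc (∑ a : Fin n, L a * ‖f' a xstar‖^2) ≤ ∑ a : Fin n, L a * P :=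
        Finset.sum_le_sum fun a _ => mul_le_mul_of_nonneg_left
          (Finset.single_le_sum (f := fun b => ‖f' b xstar‖^2)
            (fun b _ => by positivity) (mem_univ a)) (hL a).le
      _ = (∑ a : Fin n, L a) * P := by rw [← Finset.sum_mul]
  have hGHlb : -(A * ‖Gv‖^2) - Q ≤ 2 * GH := by
    have hterm : ∀ a : Fin n, -(L a * ‖Gv‖^2) - L a * ‖f' a xstar‖^2
        ≤ 2 * (L a * ⟪Gv, f' a xstar⟫) := by
      intro a
      have hnn0 : (0:ℝ) ≤ ‖Gv + f' a xstar‖^2 := sq_nonneg _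
      have hexp : ‖Gv + f' a xstar‖^2
          = ‖Gv‖^2 + 2*⟪Gv, f' a xstar⟫ + ‖f' a xstar‖^2 := norm_add_sq_real _ _
      have h1 : (0:ℝ) ≤ L a * (‖Gv‖^2 + 2*⟪Gv, f' a xstar⟫ + ‖f' a xstar‖^2) := by
        rw [← hexp]; exact mul_nonneg (hL a).le hnn0
      nlinarith [h1]
    calc -(A * ‖Gv‖^2) - Q
        = ∑ a : Fin n, (-(L a * ‖Gv‖^2) - L a * ‖f' a xstar‖^2) := by
          rw [Finset.sum_sub_distrib, Finset.sum_neg_distrib, ← Finset.sum_mul, ← hA, ← hQ]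
      _ ≤ ∑ a : Fin n, 2 * (L a * ⟪Gv, f' a xstar⟫) :=
          Finset.sum_le_sum fun a _ => hterm a
      _ = 2 * GH := by rw [← Finset.mul_sum, ← hGH]
  -- finish
  rw [hLHSeq]
  have hsm : ‖(n:ℝ)⁻¹ • Gv‖^2 = ((n:ℝ)⁻¹)^2 * ‖Gv‖^2 := by
    rw [norm_smul, mul_pow, norm_inv, Real.norm_natCast]
  rw [hsm]
  have hRHS : (2/3) * (n:ℝ) * ((1/(n:ℝ)) * A) * ((1/(n:ℝ)) * P + (n:ℝ) * (((n:ℝ)⁻¹)^2 * ‖Gv‖^2))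
      = ((2/3) * A * (P + ‖Gv‖^2)) / (n:ℝ) := by
    field_simp
  rw [hRHS, div_le_div_iff_of_pos_right hn0, hXval, hYval]
  linarith [hQP, hGHlb]
end

section
/- Let f_i : ℝ^d → ℝ be convex and differentiable with L_i-Lipschitz gradients, σ a permutation of [n], z, x_* ∈ ℝ^d, and points y^1, ..., y^n, w ∈ ℝ^d. Then Σ_{i=2}^{n} L_{σ(i)} ‖Σ_{j=1}^{i-1} (∇f_{σ(j)}(z) − ∇f_{σ(j)}(x_*))‖² ≤ 2 n³ L̄² B_f(z, x_*), where L̄ = (1/n)Σ L_i, f = (1/n)Σ f_i, and B_f(z, x_*) = f(z) − f(x_*) − ⟨∇f(x_*), z − x_*⟩. -/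
open scoped RealInnerProductSpace

section copyaux
open Set

variable {E : Type*} [NormedAddCommGroup E] [InnerProductSpace ℝ E] [CompleteSpace E]

lemma line_hasDerivAt (f : E → ℝ) (f' : E → E)
    (hgrad : ∀ x, HasGradientAt f (f' x) x) (u v : E) (t : ℝ) :
    HasDerivAt (fun s : ℝ => f (u + s • (v - u))) ⟪f' (u + t • (v - u)), v - u⟫ t := by
  have hp : HasDerivAt (fun s : ℝ => u + s • (v - u)) (v - u) t := by
    simpa using ((hasDerivAt_id t).smul_const (v - u)).const_add u
  have := (hgrad (u + t • (v - u))).hasFDerivAt.comp_hasDerivAt t hp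
  simpa [InnerProductSpace.toDual_apply_apply, Function.comp_def] using this

/-- First-order condition for convexity. -/
lemma first_order (f : E → ℝ) (f' : E → E)
    (hconv : ConvexOn ℝ Set.univ f)
    (hgrad : ∀ x, HasGradientAt f (f' x) x) (x w : E) :
    f x + ⟪f' x, w - x⟫ ≤ f w := by
  have hd : HasDerivAt (fun s : ℝ => f (x + s • (w - x))) ⟪f' x, w - x⟫ 0 := by
    simpa using line_hasDerivAt f f' hgrad x w 0
  have hslope : Filter.Tendsto (slope (fun s : ℝ => f (x + s • (w - x))) 0)
      (nhdsWithin 0 (Ioi (0:ℝ))) (nhds ⟪f' x, w - x⟫) := by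
    exact (hasDerivAt_iff_tendsto_slope.1 hd).mono_left
      (nhdsWithin_mono 0 (fun t ht => ne_of_gt ht))
  have hev : ∀ᶠ t in nhdsWithin (0:ℝ) (Ioi 0),
      slope (fun s : ℝ => f (x + s • (w - x))) 0 t ≤ f w - f x := by
    filter_upwards [Ioc_mem_nhdsGT_of_mem (by constructor <;> norm_num : (0:ℝ) ∈ Ico 0 1)]
      with t ht
    have ht0 : 0 < t := ht.1
    have ht1 : t ≤ 1 := ht.2
    have hcx := hconv.2 (mem_univ x) (mem_univ w) (by linarith : 0 ≤ 1 - t)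
      (le_of_lt ht0) (by ring)
    simp only [smul_eq_mul] at hcx
    have hpt : x + t • (w - x) = (1 - t) • x + t • w := by
      module
    rw [slope_def_field]
    simp only [zero_smul, add_zero, sub_zero]
    rw [div_le_iff₀ ht0, hpt]
    calc f ((1 - t) • x + t • w) - f x ≤ (1 - t) * f x + t * f w - f x := by linarith [hcx]
      _ = (f w - f x) * t := by ring
  have := le_of_tendsto hslope hev
  linarith

/-- Descent lemma for L-smooth functions. -/
lemma descent_lemma (f : E → ℝ) (f' : E → E)
    (hgrad : ∀ x, HasGradientAt f (f' x) x)
    (Lc : ℝ) (hlip : ∀ x y, ‖f' x - f' y‖ ≤ Lc * ‖x - y‖) (u v : E) :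
    f v ≤ f u + ⟪f' u, v - u⟫ + Lc / 2 * ‖v - u‖ ^ 2 := by
  set g : ℝ → ℝ := fun t =>
    f (u + t • (v - u)) - t * ⟪f' u, v - u⟫ - Lc / 2 * ‖v - u‖ ^ 2 * t ^ 2 with hg
  have hgd : ∀ t : ℝ, HasDerivAt g
      (⟪f' (u + t • (v - u)) - f' u, v - u⟫ - Lc * ‖v - u‖ ^ 2 * t) t := by
    intro t
    have h1 := line_hasDerivAt f f' hgrad u v t
    have h2 : HasDerivAt (fun s : ℝ => s * ⟪f' u, v - u⟫) ⟪f' u, v - u⟫ t := by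
      simpa using (hasDerivAt_id t).mul_const ⟪f' u, v - u⟫
    have h3 : HasDerivAt (fun s : ℝ => Lc / 2 * ‖v - u‖ ^ 2 * s ^ 2)
        (Lc / 2 * ‖v - u‖ ^ 2 * (2 * t)) t := by
      simpa using (hasDerivAt_pow 2 t).const_mul (Lc / 2 * ‖v - u‖ ^ 2)
    have := (h1.sub h2).sub h3
    refine this.congr_deriv ?_
    rw [inner_sub_left]; ring
  have hanti : AntitoneOn g (Icc (0:ℝ) 1) := by
    apply antitoneOn_of_deriv_nonpos (convex_Icc 0 1)
    · exact fun t _ => (hgd t).differentiableAt.continuousAt.continuousWithinAt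
    · intro t ht
      exact ((hgd t).differentiableAt).differentiableWithinAt
    · intro t ht
      rw [interior_Icc] at ht
      rw [(hgd t).deriv]
      have hb : ⟪f' (u + t • (v - u)) - f' u, v - u⟫ ≤ Lc * ‖v - u‖ ^ 2 * t := by
        calc ⟪f' (u + t • (v - u)) - f' u, v - u⟫
            ≤ ‖f' (u + t • (v - u)) - f' u‖ * ‖v - u‖ := real_inner_le_norm _ _
          _ ≤ (Lc * ‖u + t • (v - u) - u‖) * ‖v - u‖ := by
              apply mul_le_mul_of_nonneg_right (hlip _ _) (norm_nonneg _)
          _ = Lc * ‖v - u‖ ^ 2 * t := by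
              have : u + t • (v - u) - u = t • (v - u) := by abel
              rw [this, norm_smul, Real.norm_eq_abs, abs_of_pos ht.1]; ring
      linarith
  have h01 := hanti (left_mem_Icc.2 zero_le_one) (right_mem_Icc.2 zero_le_one) zero_le_one
  simp only [hg, zero_smul, add_zero, one_smul, zero_mul, zero_pow, mul_zero, sub_zero,
    one_mul, one_pow, mul_one, add_sub_cancel] at h01
  linarith

/-- Cocoercivity. -/
lemma cocoercivity (f : E → ℝ) (f' : E → E)
    (hconv : ConvexOn ℝ Set.univ f)
    (hgrad : ∀ x, HasGradientAt f (f' x) x)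
    (Lc : ℝ) (hLc : 0 < Lc) (hlip : ∀ x y, ‖f' x - f' y‖ ≤ Lc * ‖x - y‖) (x z : E) :
    ‖f' z - f' x‖ ^ 2 ≤ 2 * Lc * (f z - f x - ⟪f' x, z - x⟫) := by
  set gv := f' z - f' x with hgv
  set w := z - (1 / Lc) • gv with hw
  have h1 := first_order f f' hconv hgrad x w
  have h2 := descent_lemma f f' hgrad Lc hlip z w
  have hwz : w - z = -((1 / Lc) • gv) := by rw [hw]; abel
  have hwx : w - x = (z - x) - (1 / Lc) • gv := by rw [hw]; abel
  have e1 : ⟪f' x, w - x⟫ = ⟪f' x, z - x⟫ - (1 / Lc) * ⟪f' x, gv⟫ := by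
    rw [hwx, inner_sub_right, real_inner_smul_right]
  have e2 : ⟪f' z, w - z⟫ = -((1 / Lc) * ⟪f' z, gv⟫) := by
    rw [hwz, inner_neg_right, real_inner_smul_right]
  have e3 : ‖w - z‖ ^ 2 = (1 / Lc) ^ 2 * ‖gv‖ ^ 2 := by
    rw [hwz, norm_neg, norm_smul, mul_pow, Real.norm_eq_abs, sq_abs]
  have e4 : ⟪f' z, gv⟫ - ⟪f' x, gv⟫ = ‖gv‖ ^ 2 := by
    rw [← inner_sub_left, ← hgv, real_inner_self_eq_norm_sq]
  rw [e1] at h1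
  rw [e2, e3] at h2
  have hLc' : Lc ≠ 0 := ne_of_gt hLc
  have key : (1 / Lc) * (⟪f' z, gv⟫ - ⟪f' x, gv⟫) - Lc / 2 * ((1 / Lc) ^ 2 * ‖gv‖ ^ 2)
      ≤ f z - f x - ⟪f' x, z - x⟫ := by linarith
  rw [e4] at key
  have : (1 / Lc) * ‖gv‖ ^ 2 - Lc / 2 * ((1 / Lc) ^ 2 * ‖gv‖ ^ 2) = ‖gv‖ ^ 2 / (2 * Lc) := by
    field_simp; ring
  rw [this] at key
  rw [div_le_iff₀ (by positivity)] at key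
  linarith

end copyaux

theorem stmt_13 {dim n : ℕ}
    (f : Fin n → EuclideanSpace ℝ (Fin dim) → ℝ)
    (f' : Fin n → EuclideanSpace ℝ (Fin dim) → EuclideanSpace ℝ (Fin dim))
    (hconv : ∀ i, ConvexOn ℝ Set.univ (f i))
    (hgrad : ∀ i x, HasGradientAt (f i) (f' i x) x)
    (L : Fin n → ℝ) (hL : ∀ i, 0 < L i)
    (hlip : ∀ i x y, ‖f' i x - f' i y‖ ≤ L i * ‖x - y‖)
    (σ : Equiv.Perm (Fin n))
    (z xstar : EuclideanSpace ℝ (Fin dim)) :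
    ∑ i : Fin n, L (σ i) *
        ‖∑ j ∈ Finset.univ.filter (fun j => j < i),
            (f' (σ j) z - f' (σ j) xstar)‖ ^ 2
      ≤ 2 * (n : ℝ) ^ 3 * ((1 / n) * ∑ i : Fin n, L i) ^ 2 *
        (((1 / n) * ∑ i : Fin n, f i z) - ((1 / n) * ∑ i : Fin n, f i xstar)
          - ⟪(n : ℝ)⁻¹ • ∑ i : Fin n, f' i xstar, z - xstar⟫) := by
  rcases Nat.eq_zero_or_pos n with hn | hn
  · subst hn; simp
  have hn0 : (n : ℝ) ≠ 0 := Nat.cast_ne_zero.2 hn.ne'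
  set B : Fin n → ℝ := fun i => f i z - f i xstar - ⟪f' i xstar, z - xstar⟫ with hBdef
  have hB0 : ∀ i, 0 ≤ B i := by
    intro i
    have := first_order (f i) (f' i) (hconv i) (hgrad i) xstar z
    simp only [hBdef]; linarith
  have hcoco : ∀ i, ‖f' i z - f' i xstar‖ ^ 2 ≤ 2 * L i * B i := fun i =>
    cocoercivity (f i) (f' i) (hconv i) (hgrad i) (L i) (hL i) (hlip i) xstar z
  set SL : ℝ := ∑ i : Fin n, L i with hSL
  set SB : ℝ := ∑ i : Fin n, B i with hSB
  have hSL0 : 0 ≤ SL := Finset.sum_nonneg fun i _ => (hL i).le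
  have hSB0 : 0 ≤ SB := Finset.sum_nonneg fun i _ => hB0 i
  -- key bound for each i
  have key : ∀ i : Fin n,
      ‖∑ j ∈ Finset.univ.filter (fun j => j < i), (f' (σ j) z - f' (σ j) xstar)‖ ^ 2
        ≤ SL * (2 * SB) := by
    intro i
    set s := Finset.univ.filter (fun j : Fin n => j < i) with hs
    have h1 : ‖∑ j ∈ s, (f' (σ j) z - f' (σ j) xstar)‖
        ≤ ∑ j ∈ s, ‖f' (σ j) z - f' (σ j) xstar‖ := norm_sum_le _ _
    have h2 : (∑ j ∈ s, ‖f' (σ j) z - f' (σ j) xstar‖) ^ 2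
        ≤ (∑ j ∈ s, L (σ j)) * ∑ j ∈ s, ‖f' (σ j) z - f' (σ j) xstar‖ ^ 2 / L (σ j) := by
      have := Finset.sum_mul_sq_le_sq_mul_sq s (fun j => Real.sqrt (L (σ j)))
        (fun j => ‖f' (σ j) z - f' (σ j) xstar‖ / Real.sqrt (L (σ j)))
      have heq : ∀ j : Fin n, Real.sqrt (L (σ j)) *
          (‖f' (σ j) z - f' (σ j) xstar‖ / Real.sqrt (L (σ j)))
            = ‖f' (σ j) z - f' (σ j) xstar‖ := by
        intro j
        rw [mul_div_cancel₀ _ (Real.sqrt_ne_zero'.mpr (hL (σ j)))]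
      calc (∑ j ∈ s, ‖f' (σ j) z - f' (σ j) xstar‖) ^ 2
          = (∑ j ∈ s, Real.sqrt (L (σ j)) *
              (‖f' (σ j) z - f' (σ j) xstar‖ / Real.sqrt (L (σ j)))) ^ 2 := by
            rw [Finset.sum_congr rfl fun j _ => (heq j).symm]
        _ ≤ (∑ j ∈ s, Real.sqrt (L (σ j)) ^ 2) *
              ∑ j ∈ s, (‖f' (σ j) z - f' (σ j) xstar‖ / Real.sqrt (L (σ j))) ^ 2 := this
        _ = (∑ j ∈ s, L (σ j)) * ∑ j ∈ s, ‖f' (σ j) z - f' (σ j) xstar‖ ^ 2 / L (σ j) := by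
            congr 1
            · exact Finset.sum_congr rfl fun j _ => Real.sq_sqrt (hL (σ j)).le
            · refine Finset.sum_congr rfl fun j _ => ?_
              rw [div_pow, Real.sq_sqrt (hL (σ j)).le]
    have h3 : ∑ j ∈ s, ‖f' (σ j) z - f' (σ j) xstar‖ ^ 2 / L (σ j)
        ≤ ∑ j ∈ s, 2 * B (σ j) := by
      refine Finset.sum_le_sum fun j _ => ?_
      rw [div_le_iff₀ (hL (σ j))]
      calc ‖f' (σ j) z - f' (σ j) xstar‖ ^ 2 ≤ 2 * L (σ j) * B (σ j) := hcoco (σ j)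
        _ = 2 * B (σ j) * L (σ j) := by ring
    have h4 : ∑ j ∈ s, L (σ j) ≤ SL := by
      rw [hSL, ← Equiv.sum_comp σ L]
      exact Finset.sum_le_sum_of_subset_of_nonneg (Finset.subset_univ s)
        fun j _ _ => (hL (σ j)).le
    have h5 : ∑ j ∈ s, 2 * B (σ j) ≤ 2 * SB := by
      rw [hSB, ← Equiv.sum_comp σ B, ← Finset.mul_sum]
      refine mul_le_mul_of_nonneg_left ?_ (by norm_num)
      exact Finset.sum_le_sum_of_subset_of_nonneg (Finset.subset_univ s)
        fun j _ _ => hB0 (σ j)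
    have hsL0 : 0 ≤ ∑ j ∈ s, L (σ j) := Finset.sum_nonneg fun j _ => (hL (σ j)).le
    have hs2B : 0 ≤ ∑ j ∈ s, ‖f' (σ j) z - f' (σ j) xstar‖ ^ 2 / L (σ j) :=
      Finset.sum_nonneg fun j _ => div_nonneg (sq_nonneg _) (hL (σ j)).le
    calc ‖∑ j ∈ s, (f' (σ j) z - f' (σ j) xstar)‖ ^ 2
        ≤ (∑ j ∈ s, ‖f' (σ j) z - f' (σ j) xstar‖) ^ 2 := by
          apply pow_le_pow_left₀ (norm_nonneg _) h1
      _ ≤ (∑ j ∈ s, L (σ j)) * ∑ j ∈ s, ‖f' (σ j) z - f' (σ j) xstar‖ ^ 2 / L (σ j) := h2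
      _ ≤ SL * (2 * SB) := by
          apply mul_le_mul h4 (h3.trans h5) hs2B hSL0
  -- sum up
  have lhs_le : ∑ i : Fin n, L (σ i) *
      ‖∑ j ∈ Finset.univ.filter (fun j => j < i), (f' (σ j) z - f' (σ j) xstar)‖ ^ 2
        ≤ 2 * SL ^ 2 * SB := by
    calc ∑ i : Fin n, L (σ i) *
        ‖∑ j ∈ Finset.univ.filter (fun j => j < i), (f' (σ j) z - f' (σ j) xstar)‖ ^ 2
        ≤ ∑ i : Fin n, L (σ i) * (SL * (2 * SB)) := by
          refine Finset.sum_le_sum fun i _ => ?_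
          exact mul_le_mul_of_nonneg_left (key i) (hL (σ i)).le
      _ = (∑ i : Fin n, L (σ i)) * (SL * (2 * SB)) := by rw [← Finset.sum_mul]
      _ = 2 * SL ^ 2 * SB := by rw [Equiv.sum_comp σ L, ← hSL]; ring
  refine lhs_le.trans (le_of_eq ?_)
  have hinner : ⟪(n : ℝ)⁻¹ • ∑ i : Fin n, f' i xstar, z - xstar⟫
      = (n : ℝ)⁻¹ * ∑ i : Fin n, ⟪f' i xstar, z - xstar⟫ := by
    rw [real_inner_smul_left, sum_inner]
  rw [hinner]
  have hBs : SB = ∑ i : Fin n, f i z - ∑ i : Fin n, f i xstar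
      - ∑ i : Fin n, ⟪f' i xstar, z - xstar⟫ := by
    rw [hSB, hBdef]
    rw [Finset.sum_sub_distrib, Finset.sum_sub_distrib]
  rw [hBs, hSL]
  field_simp
end

section
/- Let f_i : ℝ^d → ℝ be convex with ‖∇f_i(x)‖ ≤ G_i for all x, i ∈ [n], let Ḡ = (1/n)Σ G_i, σ a permutation of [n], η > 0, and define y^1 = x and y^{i+1} = y^i − η ∇f_{σ(i)}(y^i) for i ∈ [n]. Then for any point w ∈ ℝ^d and any z ∈ ℝ^d: (1/n)Σ_{i=1}^n [B_{f_{σ(i)}}(w, y^i) − B_{f_{σ(i)}}(z, y^i)] ≤ 2Ḡ‖w − x‖ + Ḡ² n η. -/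
open scoped RealInnerProductSpace

lemma bregman_nonneg {E : Type*} [NormedAddCommGroup E] [InnerProductSpace ℝ E] [CompleteSpace E]
    {f : E → ℝ} {f' : E → E}
    (hconv : ConvexOn ℝ Set.univ f) (hgrad : ∀ p, HasGradientAt f (f' p) p) (u v : E) :
    0 ≤ f u - f v - ⟪f' v, u - v⟫ := by
  have hφ : ConvexOn ℝ Set.univ (f ∘ (AffineMap.lineMap v u : ℝ →ᵃ[ℝ] E)) := by
    simpa using hconv.comp_affineMap (AffineMap.lineMap v u)
  have hline : ∀ t : ℝ, HasDerivAt (fun s : ℝ => (AffineMap.lineMap v u : ℝ →ᵃ[ℝ] E) s) (u - v) t := by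
    intro t
    have : HasDerivAt (fun s : ℝ => s • (u - v) + v) ((1:ℝ) • (u - v)) t :=
      ((hasDerivAt_id t).smul_const (u - v)).add_const v
    simpa [AffineMap.lineMap_apply] using this
  have hderiv : HasDerivAt (fun s : ℝ => f ((AffineMap.lineMap v u : ℝ →ᵃ[ℝ] E) s))
      ⟪f' v, u - v⟫ 0 := by
    have h := ((hgrad ((AffineMap.lineMap v u : ℝ →ᵃ[ℝ] E) 0)).hasFDerivAt.comp_hasDerivAt 0 (hline 0))
    simpa [AffineMap.lineMap_apply, Function.comp_def] using h
  have := hφ.le_slope_of_hasDerivAt (Set.mem_univ (0:ℝ)) (Set.mem_univ (1:ℝ)) one_pos hderiv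
  simp [slope_def_field, AffineMap.lineMap_apply] at this
  linarith

lemma sq_sum_aux (a : ℕ → ℝ) (ha : ∀ i, 0 ≤ a i) :
    ∀ n : ℕ, 2 * ∑ i ∈ Finset.range n, a i * ∑ j ∈ Finset.range i, a j
      ≤ (∑ i ∈ Finset.range n, a i) ^ 2 := by
  intro n
  induction n with
  | zero => simp
  | succ n ih =>
    rw [Finset.sum_range_succ, Finset.sum_range_succ]
    have h1 : 0 ≤ a n := ha n
    have h2 : 0 ≤ ∑ j ∈ Finset.range n, a j := Finset.sum_nonneg fun j _ => ha j
    nlinarith [ih]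
/-- here `y (i : ℕ)` represents the paper's `y^{i+1}`, so that
`y 0 = x` is `y^1` and `y (i+1) = y i - η • ∇f_{σ(i)}(y i)` for `i ∈ [n]`. -/
theorem stmt_18 {dim n : ℕ}
    (f : Fin n → EuclideanSpace ℝ (Fin dim) → ℝ)
    (f' : Fin n → EuclideanSpace ℝ (Fin dim) → EuclideanSpace ℝ (Fin dim))
    (hconv : ∀ i, ConvexOn ℝ Set.univ (f i))
    (hgrad : ∀ i x, HasGradientAt (f i) (f' i x) x)
    (G : Fin n → ℝ) (hG : ∀ i, 0 < G i)
    (hbound : ∀ i x, ‖f' i x‖ ≤ G i)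
    (σ : Equiv.Perm (Fin n))
    (η : ℝ) (hη : 0 < η)
    (x : EuclideanSpace ℝ (Fin dim))
    (y : ℕ → EuclideanSpace ℝ (Fin dim))
    (hy0 : y 0 = x)
    (hyrec : ∀ i : Fin n, y ((i : ℕ) + 1) = y i - η • f' (σ i) (y i)) :
    ∀ w z : EuclideanSpace ℝ (Fin dim),
      (1 / n) * ∑ i : Fin n,
          ((f (σ i) w - f (σ i) (y i) - ⟪f' (σ i) (y i), w - y i⟫)
            - (f (σ i) z - f (σ i) (y i) - ⟪f' (σ i) (y i), z - y i⟫))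
        ≤ 2 * ((1 / n) * ∑ i : Fin n, G i) * ‖w - x‖
          + ((1 / n) * ∑ i : Fin n, G i) ^ 2 * n * η := by
  intro w z
  rcases Nat.eq_zero_or_pos n with hn | hn
  · subst hn; simp
  have hn0 : (0:ℝ) < n := by exact_mod_cast hn
  set S : ℝ := ∑ i : Fin n, G i with hSdef
  have hSσ : ∑ i : Fin n, G (σ i) = S := Equiv.sum_comp σ G
  set Gn : ℕ → ℝ := fun j => if h : j < n then G (σ ⟨j, h⟩) else 0 with hGndef
  have hGn0 : ∀ j, 0 ≤ Gn j := by
    intro j; simp only [hGndef]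
    split
    · exact (hG _).le
    · exact le_rfl
  set D : ℕ → ℝ := fun i => ∑ j ∈ Finset.range i, Gn j with hDdef
  have hD0 : ∀ i, 0 ≤ D i := fun i => Finset.sum_nonneg fun j _ => hGn0 j
  -- distance bound
  have hdist : ∀ i : ℕ, i ≤ n → ‖y i - x‖ ≤ η * D i := by
    intro i
    induction i with
    | zero => intro _; simp [hy0, hDdef]
    | succ i ih =>
      intro h
      have hi : i < n := h
      have hrec := hyrec ⟨i, hi⟩
      simp only at hrec
      have hstep : y (i + 1) - x = (y i - x) - η • f' (σ ⟨i, hi⟩) (y i) := by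
        rw [hrec]; abel
      have hnorm : ‖η • f' (σ ⟨i, hi⟩) (y i)‖ ≤ η * G (σ ⟨i, hi⟩) := by
        rw [norm_smul, Real.norm_eq_abs, abs_of_pos hη]
        exact mul_le_mul_of_nonneg_left (hbound _ _) hη.le
      have hDi : D (i + 1) = D i + G (σ ⟨i, hi⟩) := by
        simp [hDdef, Finset.sum_range_succ, hGndef, hi]
      calc ‖y (i + 1) - x‖ ≤ ‖y i - x‖ + ‖η • f' (σ ⟨i, hi⟩) (y i)‖ := by
            rw [hstep]; exact norm_sub_le _ _
        _ ≤ η * D i + η * G (σ ⟨i, hi⟩) := add_le_add (ih hi.le) hnorm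
        _ = η * D (i + 1) := by rw [hDi]; ring
  -- per-term bound
  have hterm : ∀ i : Fin n,
      ((f (σ i) w - f (σ i) (y i) - ⟪f' (σ i) (y i), w - y i⟫)
        - (f (σ i) z - f (σ i) (y i) - ⟪f' (σ i) (y i), z - y i⟫))
      ≤ 2 * G (σ i) * (‖w - x‖ + η * D i) := by
    intro i
    have hBz := bregman_nonneg (hconv (σ i)) (hgrad (σ i)) z (y i)
    have hBw := bregman_nonneg (hconv (σ i)) (hgrad (σ i)) (y i) w
    have hd : ‖w - y (i : ℕ)‖ ≤ ‖w - x‖ + η * D i := by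
      have h1 : ‖w - y (i : ℕ)‖ ≤ ‖w - x‖ + ‖y (i : ℕ) - x‖ := by
        have : w - y (i : ℕ) = (w - x) - (y (i : ℕ) - x) := by abel
        rw [this]; exact norm_sub_le _ _
      linarith [hdist i i.isLt.le]
    have hc1 : |⟪f' (σ i) w, y (i : ℕ) - w⟫| ≤ G (σ i) * ‖w - y (i : ℕ)‖ := by
      calc |⟪f' (σ i) w, y (i : ℕ) - w⟫| ≤ ‖f' (σ i) w‖ * ‖y (i : ℕ) - w‖ :=
            abs_real_inner_le_norm _ _
        _ ≤ G (σ i) * ‖w - y (i : ℕ)‖ := by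
            rw [norm_sub_rev]
            exact mul_le_mul_of_nonneg_right (hbound _ _) (norm_nonneg _)
    have hc2 : |⟪f' (σ i) (y (i : ℕ)), w - y (i : ℕ)⟫| ≤ G (σ i) * ‖w - y (i : ℕ)‖ := by
      calc |⟪f' (σ i) (y (i : ℕ)), w - y (i : ℕ)⟫| ≤ ‖f' (σ i) (y (i : ℕ))‖ * ‖w - y (i : ℕ)‖ :=
            abs_real_inner_le_norm _ _
        _ ≤ G (σ i) * ‖w - y (i : ℕ)‖ :=
            mul_le_mul_of_nonneg_right (hbound _ _) (norm_nonneg _)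
    have hGpos := hG (σ i)
    rw [abs_le] at hc1 hc2
    nlinarith [hc1.1, hc1.2, hc2.1, hc2.2, mul_le_mul_of_nonneg_left hd hGpos.le]
  -- sum of products bound
  have hDrange : ∑ i : Fin n, G (σ i) * D (i : ℕ) = ∑ i ∈ Finset.range n, Gn i * D i := by
    rw [← Fin.sum_univ_eq_sum_range (fun i => Gn i * D i) n]
    refine Finset.sum_congr rfl fun i _ => ?_
    simp [hGndef, i.isLt]
  have hSrange : ∑ i ∈ Finset.range n, Gn i = S := by
    rw [← Fin.sum_univ_eq_sum_range Gn n, ← hSσ]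
    refine Finset.sum_congr rfl fun i _ => ?_
    simp [hGndef, i.isLt]
  have hquad : 2 * ∑ i : Fin n, G (σ i) * D (i : ℕ) ≤ S ^ 2 := by
    rw [hDrange, ← hSrange]
    exact sq_sum_aux Gn hGn0 n
  -- total sum bound
  have hsum : ∑ i : Fin n,
      ((f (σ i) w - f (σ i) (y i) - ⟪f' (σ i) (y i), w - y i⟫)
        - (f (σ i) z - f (σ i) (y i) - ⟪f' (σ i) (y i), z - y i⟫))
      ≤ 2 * S * ‖w - x‖ + η * S ^ 2 := by
    calc _ ≤ ∑ i : Fin n, 2 * G (σ i) * (‖w - x‖ + η * D (i : ℕ)) :=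
          Finset.sum_le_sum fun i _ => hterm i
      _ = 2 * ‖w - x‖ * (∑ i : Fin n, G (σ i))
          + 2 * η * ∑ i : Fin n, G (σ i) * D (i : ℕ) := by
          rw [Finset.mul_sum, Finset.mul_sum, ← Finset.sum_add_distrib]
          exact Finset.sum_congr rfl fun i _ => by ring
      _ ≤ 2 * S * ‖w - x‖ + η * S ^ 2 := by
          rw [hSσ]
          nlinarith [hquad, hη]
  have hRHS : 2 * ((1 / (n:ℝ)) * S) * ‖w - x‖ + ((1 / (n:ℝ)) * S) ^ 2 * n * η
      = (1 / (n:ℝ)) * (2 * S * ‖w - x‖ + η * S ^ 2) := by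
    field_simp
  rw [hRHS]
  exact mul_le_mul_of_nonneg_left hsum (by positivity)
end
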